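/- Let B = [[Λ, c],[bᵀ, δ]] ∈ M(m+1, ℂ) where Λ = diag(μ_1, ..., μ_m) with distinct entries, b, c ∈ ℂ^m, δ ∈ ℂ. Let P_m(λ) = ∏_i (λ - μ_i) and let P_{m+1} be the characteristic polynomial of B. Then for each i, b_i c_i = -P_{m+1}(μ_i) / P_m'(μ_i); equivalently diag(b)·diag(c) = -P_{m+1}(Λ)·(P_m'(Λ))^{-1}. -/

import Mathlib

open Matrix Polynomial Finset

lemma eval_derivative_prod_X_sub_C {m : ℕ} (μ : Fin m → ℂ) (i : Fin m) :
    (derivative (∏ j : Fin m, (X - C (μ j)))).eval (μ i) =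
      ∏ j ∈ univ.erase i, (μ i - μ j) := by
  rw [← Finset.mul_prod_erase univ _ (mem_univ i), derivative_mul, derivative_X_sub_C]
  simp [eval_prod]

/-- For an arrow matrix `B = [[Λ, c],[bᵀ, δ]]` with `Λ = diag(μ)` having distinct
entries, one has `b i * c i = -P_{m+1}(μ i) / P_m'(μ i)`, where `P_m(λ) = ∏ (λ - μ j)`
and `P_{m+1}` is the characteristic polynomial of `B`. -/
theorem arrow_entry_product_formula {m : ℕ}
    (B : Matrix (Fin (m + 1)) (Fin (m + 1)) ℂ)
    (μ : Fin m → ℂ) (hμ : Function.Injective μ)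
    (b c : Fin m → ℂ) (δ : ℂ)
    (htop : ∀ i j : Fin m, B i.castSucc j.castSucc = if i = j then μ i else 0)
    (hcol : ∀ i : Fin m, B i.castSucc (Fin.last m) = c i)
    (hrow : ∀ i : Fin m, B (Fin.last m) i.castSucc = b i)
    (hcorner : B (Fin.last m) (Fin.last m) = δ) :
    ∀ i : Fin m,
      b i * c i =
        -(B.charpoly.eval (μ i)) /
          ((derivative (∏ j : Fin m, (X - C (μ j)))).eval (μ i)) := by
  intro i
  set lam := μ i with hl
  -- evaluate the characteristic polynomial as a determinant
  set N : Matrix (Fin (m + 1)) (Fin (m + 1)) ℂ :=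
    (charmatrix B).map (evalRingHom lam) with hN
  have hval : B.charpoly.eval lam = N.det := by
    rw [Matrix.charpoly]
    exact (RingHom.map_det (evalRingHom lam) (charmatrix B))
  -- entries of N
  have hNtop : ∀ j k : Fin m, N j.castSucc k.castSucc =
      if j = k then lam - μ j else 0 := by
    intro j k
    by_cases h : j = k
    · subst h
      simp [hN, Matrix.map_apply, charmatrix_apply_eq, htop]
    · have : j.castSucc ≠ k.castSucc := by
        simpa [Fin.castSucc_inj] using h
      simp [hN, Matrix.map_apply, charmatrix_apply_ne _ _ _ this, htop, h]
  have hNcol : ∀ j : Fin m, N j.castSucc (Fin.last m) = -(c j) := by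
    intro j
    have : j.castSucc ≠ Fin.last m := (Fin.castSucc_lt_last j).ne
    simp [hN, Matrix.map_apply, charmatrix_apply_ne _ _ _ this, hcol]
  have hNrow : ∀ j : Fin m, N (Fin.last m) j.castSucc = -(b j) := by
    intro j
    have : Fin.last m ≠ j.castSucc := ((Fin.castSucc_lt_last j).ne).symm
    simp [hN, Matrix.map_apply, charmatrix_apply_ne _ _ _ this, hrow]
  -- the only permutation contributing to det N
  set σ : Equiv.Perm (Fin (m + 1)) := Equiv.swap i.castSucc (Fin.last m) with hσ
  have hine : i.castSucc ≠ Fin.last m := (Fin.castSucc_lt_last i).ne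
  have hdet : N.det = Equiv.Perm.sign σ • ∏ j, N (σ j) j := by
    rw [Matrix.det_apply]
    refine Finset.sum_eq_single σ ?_ (by simp)
    intro π _ hπ
    have hzero : ∏ j, N (π j) j = 0 := by
      by_cases hA : π i.castSucc = Fin.last m
      · -- some k ≠ i has π (castSucc k) ≠ castSucc k, giving a zero entry,
        -- otherwise π = σ
        by_cases hB : ∀ k : Fin m, k ≠ i → π k.castSucc = k.castSucc
        · exfalso
          apply hπ
          ext j
          induction j using Fin.lastCases with
          | last =>
            -- π (last) = castSucc i
            have hπlast : π (Fin.last m) = i.castSucc := by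
              rcases Fin.eq_castSucc_or_eq_last (π (Fin.last m)) with ⟨k, hk⟩ | hk
              · by_cases hki : k = i
                · rw [hk, hki]
                · exfalso
                  have := hB k hki
                  have : π (Fin.last m) = π k.castSucc := by rw [hk, this]
                  have := π.injective this
                  exact (Fin.castSucc_lt_last k).ne this.symm
              · exfalso
                have : π (Fin.last m) = π i.castSucc := by rw [hk, hA]
                exact hine (π.injective this).symm
            rw [hπlast, hσ, Equiv.swap_apply_right]
          | cast k =>
            by_cases hki : k = i
            · subst hki
              rw [hA, hσ, Equiv.swap_apply_left]
            · rw [hB k hki, hσ,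
                Equiv.swap_apply_of_ne_of_ne (by simpa [Fin.castSucc_inj] using hki)
                  (Fin.castSucc_lt_last k).ne]
        · push_neg at hB
          obtain ⟨k, hki, hk⟩ := hB
          refine Finset.prod_eq_zero (mem_univ k.castSucc) ?_
          rcases Fin.eq_castSucc_or_eq_last (π k.castSucc) with ⟨k', hk'⟩ | hk'
          · have hk'k : k' ≠ k := by
              intro h; apply hk; rw [hk', h]
            rw [hk', hNtop k' k, if_neg hk'k]
          · exfalso
            have : π k.castSucc = π i.castSucc := by rw [hk', hA]
            have := π.injective this
            exact hki (by simpa [Fin.castSucc_inj] using this)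
      · -- the factor in column castSucc i is zero
        refine Finset.prod_eq_zero (mem_univ i.castSucc) ?_
        rcases Fin.eq_castSucc_or_eq_last (π i.castSucc) with ⟨k', hk'⟩ | hk'
        · by_cases hk'i : k' = i
          · rw [hk', hk'i, hNtop i i, if_pos rfl, hl, sub_self]
          · rw [hk', hNtop k' i, if_neg hk'i]
        · exact absurd hk' hA
    rw [hzero, smul_zero]
  -- compute the surviving term
  have hprod : ∏ j, N (σ j) j =
      b i * c i * ∏ j ∈ univ.erase i, (lam - μ j) := by
    rw [Fin.prod_univ_castSucc]
    have hlast : N (σ (Fin.last m)) (Fin.last m) = -(c i) := by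
      rw [hσ, Equiv.swap_apply_right, hNcol]
    have hmid : ∀ k : Fin m, N (σ k.castSucc) k.castSucc =
        if k = i then -(b k) else lam - μ k := by
      intro k
      by_cases hk : k = i
      · subst hk
        rw [hσ, Equiv.swap_apply_left, if_pos rfl, hNrow]
      · rw [hσ, Equiv.swap_apply_of_ne_of_ne (by simpa [Fin.castSucc_inj] using hk)
          (Fin.castSucc_lt_last k).ne, hNtop k k, if_pos rfl, if_neg hk]
    rw [hlast]
    have : ∏ k : Fin m, N (σ k.castSucc) k.castSucc =
        (-(b i)) * ∏ k ∈ univ.erase i, (lam - μ k) := by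
      rw [← Finset.mul_prod_erase univ _ (mem_univ i), hmid i, if_pos rfl]
      congr 1
      refine Finset.prod_congr rfl fun k hk => ?_
      rw [hmid k, if_neg (Finset.ne_of_mem_erase hk)]
    rw [this]
    ring
  have hsign : Equiv.Perm.sign σ = -1 := Equiv.Perm.sign_swap hine
  have hP : (∏ j ∈ univ.erase i, (lam - μ j)) ≠ 0 := by
    refine Finset.prod_ne_zero_iff.mpr fun j hj => ?_
    exact sub_ne_zero.mpr fun h => (Finset.ne_of_mem_erase hj) (hμ h.symm)
  rw [eval_derivative_prod_X_sub_C, ← hl, hval, hdet, hsign, hprod]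
  simp only [Units.smul_def, Units.val_neg, Units.val_one]
  field_simp
  simp
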